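/- arXiv:1207.4381 — 4 statements merged into one kernel-verified Lean document; each statement's English description precedes it below -/
import Mathlib

section
/- If M is a Borel measure on ℝ^d with M({0}) = 0 and ∫ (|x|² ∧ |x|^β) dM(x) < ∞ for some β ∈ [0,2], then its β-inversion M^β, defined by M^β({0}) = 0 and M^β(A) = ∫ 1_A(x/|x|²) |x|^(2+β) dM(x) for Borel sets A, also satisfies M^β({0}) = 0 and ∫ (|x|² ∧ |x|^β) dM^β(x) < ∞. -/
open MeasureTheory ENNReal Filter Topology Set

noncomputable section

abbrev Rd (d : ℕ) := EuclideanSpace ℝ (Fin d)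

/-- The spherical inversion map `x ↦ x / |x|²` (sending `0` to `0`). -/
def sphInv {d : ℕ} (x : Rd d) : Rd d := (‖x‖ ^ 2)⁻¹ • x

/-- The β-inversion of a measure `M`:
`M^β(A) = ∫ 1_A(x/|x|²) |x|^{2+β} M(dx)`. -/
def betaInv {d : ℕ} (β : ℝ) (M : Measure (Rd d)) : Measure (Rd d) :=
  Measure.map sphInv (M.withDensity fun x => ENNReal.ofReal (‖x‖ ^ (2 + β)))

/-- `M ∈ 𝔐^β`: `M({0}) = 0` and `∫ (|x|² ∧ |x|^β) M(dx) < ∞`. -/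
def MemM {d : ℕ} (β : ℝ) (M : Measure (Rd d)) : Prop :=
  M {0} = 0 ∧ ∫⁻ x, ENNReal.ofReal (min (‖x‖ ^ (2 : ℝ)) (‖x‖ ^ β)) ∂M < ⊤

lemma sphInv_meas {d : ℕ} : Measurable (sphInv (d := d)) :=
  ((measurable_norm.pow_const 2).inv).smul measurable_id

lemma sphInv_preimage_zero {d : ℕ} : sphInv ⁻¹' ({0} : Set (Rd d)) = {0} := by
  ext x
  simp only [mem_preimage, mem_singleton_iff, sphInv]
  constructor
  · intro h
    by_contra hx
    have hn : ‖x‖ ≠ 0 := norm_ne_zero_iff.mpr hx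
    have : (‖x‖ ^ 2)⁻¹ ≠ 0 := by positivity
    exact hx (by simpa [smul_eq_zero, this] using h)
  · intro h; simp [h]

lemma norm_sphInv {d : ℕ} (x : Rd d) : ‖sphInv x‖ = ‖x‖⁻¹ := by
  rcases eq_or_ne x 0 with rfl | hx
  · simp [sphInv]
  · have hn : ‖x‖ ≠ 0 := norm_ne_zero_iff.mpr hx
    rw [sphInv, norm_smul]
    field_simp
    rw [norm_div, norm_one, norm_pow, norm_norm, mul_one_div_cancel (pow_ne_zero 2 hn)]

lemma key_ptwise {d : ℕ} (β : ℝ) (x : Rd d) (hx : x ≠ 0) :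
    ENNReal.ofReal (‖x‖ ^ (2 + β)) *
      ENNReal.ofReal (min (‖sphInv x‖ ^ (2 : ℝ)) (‖sphInv x‖ ^ β))
      = ENNReal.ofReal (min (‖x‖ ^ (2 : ℝ)) (‖x‖ ^ β)) := by
  have ht : (0 : ℝ) < ‖x‖ := norm_pos_iff.mpr hx
  rw [norm_sphInv, ← ENNReal.ofReal_mul (by positivity)]
  congr 1
  rw [Real.inv_rpow ht.le, Real.inv_rpow ht.le,
      ← Real.rpow_neg ht.le, ← Real.rpow_neg ht.le,
      mul_min_of_nonneg _ _ (by positivity),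
      ← Real.rpow_add ht, ← Real.rpow_add ht]
  rw [min_comm]
  congr 2 <;> ring

theorem stmt0 {d : ℕ} (β : ℝ) (hβ : β ∈ Set.Icc (0 : ℝ) 2)
    (M : Measure (Rd d)) (hM : MemM β M) :
    (∀ A : Set (Rd d), MeasurableSet A →
        betaInv β M A
          = ∫⁻ x, A.indicator (fun _ => (1 : ℝ≥0∞)) (sphInv x)
              * ENNReal.ofReal (‖x‖ ^ (2 + β)) ∂M) ∧
      MemM β (betaInv β M) := by
  have hb0 : (0:ℝ) ≤ β := hβ.1
  have m1 : Measurable fun x : Rd d => ‖x‖ ^ (2 + β) :=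
    (Real.continuous_rpow_const (by linarith)).measurable.comp measurable_norm
  have m2 : Measurable fun x : Rd d => ‖x‖ ^ (2:ℝ) :=
    (Real.continuous_rpow_const (by norm_num)).measurable.comp measurable_norm
  have m3 : Measurable fun x : Rd d => ‖x‖ ^ β :=
    (Real.continuous_rpow_const hb0).measurable.comp measurable_norm
  have hgmeas : Measurable fun x : Rd d => ENNReal.ofReal (‖x‖ ^ (2 + β)) :=
    ENNReal.measurable_ofReal.comp m1
  have hfmeas : Measurable fun y : Rd d =>
      ENNReal.ofReal (min (‖y‖ ^ (2 : ℝ)) (‖y‖ ^ β)) :=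
    ENNReal.measurable_ofReal.comp (m2.min m3)
  refine ⟨fun A hA => ?_, ?_, ?_⟩
  · rw [betaInv, Measure.map_apply sphInv_meas hA,
      withDensity_apply _ (sphInv_meas hA),
      ← lintegral_indicator (sphInv_meas hA) _]
    congr 1; ext x
    by_cases hx : sphInv x ∈ A <;> simp [indicator, hx]
  · rw [betaInv, Measure.map_apply sphInv_meas (measurableSet_singleton 0),
      sphInv_preimage_zero, withDensity_apply _ (measurableSet_singleton 0),
      Measure.restrict_eq_zero.mpr hM.1, lintegral_zero_measure]
  · rw [betaInv, lintegral_map hfmeas sphInv_meas,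
      lintegral_withDensity_eq_lintegral_mul _ hgmeas
        (show Measurable fun a : Rd d =>
            ENNReal.ofReal (min (‖sphInv a‖ ^ (2:ℝ)) (‖sphInv a‖ ^ β)) from
          hfmeas.comp sphInv_meas)]
    have hae : ∀ᵐ x ∂M, x ≠ 0 := by
      rw [ae_iff]; simpa using hM.1
    simp only [Pi.mul_apply]
    refine lt_of_eq_of_lt (lintegral_congr_ae ?_) hM.2
    filter_upwards [hae] with x hx
    exact key_ptwise β x hx
end
end

section
/- Let η ∈ (0,2), β ∈ [0, η), and let M be the Lévy measure of an η-stable distribution: M(A) = ∫_{S^{d-1}} ∫_0^∞ 1_A(ur) r^{-1-η} dr σ(du) for a finite nonzero Borel measure σ on S^{d-1}. Then M ∈ 𝔐^β and its β-inversion satisfies M^β(A) = ∫_{S^{d-1}} ∫_0^∞ 1_A(ur) r^{-1-(2+β-η)} dr σ(du); that is, M^β is the Lévy measure of a (2+β-η)-stable distribution with the same spectral measure σ. -/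
open MeasureTheory ENNReal Filter Topology Set

noncomputable section

/-- The value `∫_{S^{d-1}} ∫_0^∞ 1_A(r u) r^{-1-η} dr σ(du)` defining an
`η`-stable Lévy measure with spectral measure `σ`. -/
def stableVal {d : ℕ} (η : ℝ) (σ : Measure (Metric.sphere (0 : Rd d) 1))
    (A : Set (Rd d)) : ℝ≥0∞ :=
  ∫⁻ u, (∫⁻ r in Set.Ioi (0 : ℝ),
    A.indicator (fun _ => (1 : ℝ≥0∞)) (r • (u : Rd d)) * ENNReal.ofReal (r ^ (-1 - η))
      ∂volume) ∂σ

namespace Stmt11Aux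

variable {d : ℕ}

lemma measurable_sphInv : Measurable (sphInv (d := d)) :=
  ((measurable_norm.pow_const 2).inv).smul measurable_id

def phi (d : ℕ) (p : Metric.sphere (0 : Rd d) 1 × ℝ) : Rd d := p.2 • (p.1 : Rd d)

lemma measurable_phi : Measurable (phi d) :=
  measurable_snd.smul (measurable_subtype_coe.comp measurable_fst)

def rho (η : ℝ) : Measure ℝ :=
  (volume.restrict (Set.Ioi 0)).withDensity fun r => ENNReal.ofReal (r ^ (-1 - η))

instance (η : ℝ) : SFinite (rho η) := by unfold rho; infer_instance

lemma measurable_w (η : ℝ) : Measurable fun r : ℝ => ENNReal.ofReal (r ^ (-1 - η)) := by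
  fun_prop

lemma key (η : ℝ) (σ : Measure (Metric.sphere (0 : Rd d) 1)) [IsFiniteMeasure σ]
    (f : Rd d → ℝ≥0∞) (hf : Measurable f) :
    ∫⁻ x, f x ∂(Measure.map (phi d) (σ.prod (rho η))) =
      ∫⁻ u, ∫⁻ r in Set.Ioi (0 : ℝ),
        f (r • (u : Rd d)) * ENNReal.ofReal (r ^ (-1 - η)) ∂volume ∂σ := by
  rw [lintegral_map hf measurable_phi,
    lintegral_prod (fun p => f (phi d p)) (hf.comp measurable_phi).aemeasurable]
  refine lintegral_congr fun u => ?_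
  rw [rho, lintegral_withDensity_eq_lintegral_mul (volume.restrict (Set.Ioi 0)) (measurable_w η)
    (g := fun r => f (phi d (u, r)))
    (by exact hf.comp ((continuous_id.smul continuous_const).measurable : Measurable fun r : ℝ => r • (u : Rd d)))]
  exact lintegral_congr fun r => mul_comm _ _

lemma map_eq_stableVal (η : ℝ) (σ : Measure (Metric.sphere (0 : Rd d) 1)) [IsFiniteMeasure σ]
    {A : Set (Rd d)} (hA : MeasurableSet A) :
    Measure.map (phi d) (σ.prod (rho η)) A = stableVal η σ A := by
  rw [← lintegral_indicator_one hA,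
    key η σ (A.indicator 1) (measurable_one.indicator hA)]
  rfl

lemma lintegral_inv_Ioi (g : ℝ → ℝ≥0∞) :
    ∫⁻ x in Set.Ioi (0 : ℝ), g x ∂volume =
      ∫⁻ x in Set.Ioi (0 : ℝ), ENNReal.ofReal ((x ^ 2)⁻¹) * g x⁻¹ ∂volume := by
  have himg : (fun x : ℝ => x⁻¹) '' Set.Ioi 0 = Set.Ioi 0 := by
    ext x
    constructor
    · rintro ⟨y, hy, rfl⟩; exact inv_pos.mpr (Set.mem_Ioi.mp hy)
    · intro hx; exact ⟨x⁻¹, Set.mem_Ioi.mpr (inv_pos.mpr (Set.mem_Ioi.mp hx)), inv_inv x⟩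
  have h := lintegral_image_eq_lintegral_abs_det_fderiv_mul volume measurableSet_Ioi
      (f' := fun x : ℝ => (1 : ℝ →L[ℝ] ℝ).smulRight (-(x ^ 2)⁻¹))
      (fun x hx => (hasDerivAt_inv (ne_of_gt hx)).hasDerivWithinAt.hasFDerivWithinAt)
      (Set.injOn_of_injective inv_injective) g
  rw [himg] at h
  rw [h]
  refine setLIntegral_congr_fun measurableSet_Ioi (fun x hx => ?_)
  rw [ContinuousLinearMap.det_smulRight, ContinuousLinearMap.one_apply, one_mul, abs_neg, abs_of_nonneg (inv_nonneg.mpr (sq_nonneg x))]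

end Stmt11Aux

theorem stmt11 {d : ℕ} (η β : ℝ) (hη : η ∈ Set.Ioo (0 : ℝ) 2)
    (hβ : β ∈ Set.Ico (0 : ℝ) η)
    (σ : Measure (Metric.sphere (0 : Rd d) 1)) [IsFiniteMeasure σ] (hσ : σ ≠ 0)
    (M : Measure (Rd d))
    (hM : ∀ A : Set (Rd d), MeasurableSet A → M A = stableVal η σ A) :
    MemM β M ∧
      ∀ A : Set (Rd d), MeasurableSet A →
        betaInv β M A = stableVal (2 + β - η) σ A := by
  obtain ⟨hη0, hη2⟩ := hη
  obtain ⟨hβ0, hβη⟩ := hβ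
  have hMeq : M = Measure.map (Stmt11Aux.phi d) (σ.prod (Stmt11Aux.rho η)) :=
    Measure.ext fun A hA => (hM A hA).trans (Stmt11Aux.map_eq_stableVal η σ hA).symm
  have hnorm : ∀ u : Metric.sphere (0 : Rd d) 1, ‖(u : Rd d)‖ = 1 := fun u =>
    mem_sphere_zero_iff_norm.mp u.2
  have hnorm_smul : ∀ (u : Metric.sphere (0 : Rd d) 1) (r : ℝ), 0 < r →
      ‖r • (u : Rd d)‖ = r := by
    intro u r hr
    rw [norm_smul, hnorm, mul_one, Real.norm_eq_abs, abs_of_pos hr]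
  have hne : ∀ (u : Metric.sphere (0 : Rd d) 1) (r : ℝ), 0 < r → r • (u : Rd d) ≠ 0 := by
    intro u r hr h
    rcases smul_eq_zero.mp h with h | h
    · exact (ne_of_gt hr) h
    · have := hnorm u
      rw [h, norm_zero] at this
      norm_num at this
  constructor
  · constructor
    · rw [hM _ (measurableSet_singleton 0)]
      have h0 : ∀ u : Metric.sphere (0 : Rd d) 1,
          (∫⁻ r in Set.Ioi (0 : ℝ),
            Set.indicator {(0 : Rd d)} (fun _ => (1 : ℝ≥0∞)) (r • (u : Rd d)) *
              ENNReal.ofReal (r ^ (-1 - η)) ∂volume) = 0 := by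
        intro u
        have hz : ∀ r ∈ Set.Ioi (0 : ℝ),
            Set.indicator {(0 : Rd d)} (fun _ => (1 : ℝ≥0∞)) (r • (u : Rd d)) *
              ENNReal.ofReal (r ^ (-1 - η)) = 0 := by
          intro r hr
          rw [Set.indicator_of_notMem (by simpa using hne u r hr), zero_mul]
        rw [setLIntegral_congr_fun measurableSet_Ioi hz, lintegral_zero]
      unfold stableVal
      simp only [h0, lintegral_zero]
    · rw [hMeq, Stmt11Aux.key η σ _ (by fun_prop)]
      set C : ℝ≥0∞ := ∫⁻ r in Set.Ioi (0 : ℝ),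
          ENNReal.ofReal (min (r ^ (2 : ℝ)) (r ^ β)) * ENNReal.ofReal (r ^ (-1 - η)) ∂volume
        with hC
      have hinner : ∀ u : Metric.sphere (0 : Rd d) 1,
          (∫⁻ r in Set.Ioi (0 : ℝ),
            ENNReal.ofReal (min (‖r • (u : Rd d)‖ ^ (2 : ℝ)) (‖r • (u : Rd d)‖ ^ β)) *
              ENNReal.ofReal (r ^ (-1 - η)) ∂volume) = C := by
        intro u
        refine setLIntegral_congr_fun measurableSet_Ioi (fun r hr => ?_)
        rw [hnorm_smul u r hr]
      simp only [hinner, lintegral_const]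
      have hClt : C < ⊤ := by
        have hsplit : Set.Ioc (0 : ℝ) 1 ∪ Set.Ioi 1 = Set.Ioi 0 :=
          Set.Ioc_union_Ioi_eq_Ioi zero_le_one
        rw [hC, ← hsplit, lintegral_union measurableSet_Ioi (Set.Ioc_disjoint_Ioi le_rfl)]
        have h1 : (∫⁻ r in Set.Ioc (0 : ℝ) 1,
            ENNReal.ofReal (min (r ^ (2 : ℝ)) (r ^ β)) * ENNReal.ofReal (r ^ (-1 - η)) ∂volume)
            ≤ ∫⁻ r in Set.Ioc (0 : ℝ) 1, ENNReal.ofReal (r ^ (1 - η)) ∂volume := by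
          refine setLIntegral_mono (by fun_prop) fun r hr => ?_
          obtain ⟨hr0, hr1⟩ := hr
          rw [← ENNReal.ofReal_mul (le_min (Real.rpow_nonneg hr0.le _) (Real.rpow_nonneg hr0.le _))]
          refine ENNReal.ofReal_le_ofReal ?_
          calc min (r ^ (2 : ℝ)) (r ^ β) * r ^ (-1 - η)
              ≤ r ^ (2 : ℝ) * r ^ (-1 - η) :=
                mul_le_mul_of_nonneg_right (min_le_left _ _) (Real.rpow_nonneg hr0.le _)
            _ = r ^ (1 - η) := by rw [← Real.rpow_add hr0]; ring_nf
        have h2 : (∫⁻ r in Set.Ioi (1 : ℝ),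
            ENNReal.ofReal (min (r ^ (2 : ℝ)) (r ^ β)) * ENNReal.ofReal (r ^ (-1 - η)) ∂volume)
            ≤ ∫⁻ r in Set.Ioi (1 : ℝ), ENNReal.ofReal (r ^ (β - 1 - η)) ∂volume := by
          refine setLIntegral_mono (by fun_prop) fun r hr => ?_
          have hr0 : (0 : ℝ) < r := lt_trans one_pos hr
          rw [← ENNReal.ofReal_mul (le_min (Real.rpow_nonneg hr0.le _) (Real.rpow_nonneg hr0.le _))]
          refine ENNReal.ofReal_le_ofReal ?_
          calc min (r ^ (2 : ℝ)) (r ^ β) * r ^ (-1 - η)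
              ≤ r ^ β * r ^ (-1 - η) :=
                mul_le_mul_of_nonneg_right (min_le_right _ _) (Real.rpow_nonneg hr0.le _)
            _ = r ^ (β - 1 - η) := by rw [← Real.rpow_add hr0]; ring_nf
        have i1 : (∫⁻ r in Set.Ioc (0 : ℝ) 1, ENNReal.ofReal (r ^ (1 - η)) ∂volume) < ⊤ := by
          have hint : IntegrableOn (fun r : ℝ => r ^ (1 - η)) (Set.Ioc 0 1) := by
            have := intervalIntegral.intervalIntegrable_rpow' (a := 0) (b := 1)
              (by linarith : (-1 : ℝ) < 1 - η)
            rwa [intervalIntegrable_iff, uIoc_of_le zero_le_one] at this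
          exact hint.lintegral_lt_top
        have i2 : (∫⁻ r in Set.Ioi (1 : ℝ), ENNReal.ofReal (r ^ (β - 1 - η)) ∂volume) < ⊤ := by
          have hint : IntegrableOn (fun r : ℝ => r ^ (β - 1 - η)) (Set.Ioi 1) :=
            (integrableOn_Ioi_rpow_iff one_pos).mpr (by linarith)
          exact hint.lintegral_lt_top
        exact ENNReal.add_lt_top.mpr ⟨lt_of_le_of_lt h1 i1, lt_of_le_of_lt h2 i2⟩
      exact ENNReal.mul_lt_top hClt (measure_lt_top σ _)
  · intro A hA
    have hg : Measurable fun x : Rd d => ENNReal.ofReal (‖x‖ ^ (2 + β)) := by fun_prop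
    rw [betaInv, Measure.map_apply Stmt11Aux.measurable_sphInv hA,
      withDensity_apply _ (Stmt11Aux.measurable_sphInv hA),
      ← lintegral_indicator (Stmt11Aux.measurable_sphInv hA),
      hMeq, Stmt11Aux.key η σ _ (hg.indicator (Stmt11Aux.measurable_sphInv hA))]
    unfold stableVal
    refine lintegral_congr fun u => ?_
    have hstep1 : (∫⁻ r in Set.Ioi (0 : ℝ),
        (sphInv ⁻¹' A).indicator (fun x => ENNReal.ofReal (‖x‖ ^ (2 + β))) (r • (u : Rd d)) *
          ENNReal.ofReal (r ^ (-1 - η)) ∂volume)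
        = ∫⁻ r in Set.Ioi (0 : ℝ),
            A.indicator (fun _ => (1 : ℝ≥0∞)) (r⁻¹ • (u : Rd d)) *
              ENNReal.ofReal (r ^ (1 + β - η)) ∂volume := by
      refine setLIntegral_congr_fun measurableSet_Ioi (fun r hr => ?_)
      have hr0 : (0 : ℝ) < r := hr
      have hs : sphInv (r • (u : Rd d)) = r⁻¹ • (u : Rd d) := by
        unfold sphInv
        rw [hnorm_smul u r hr0, smul_smul]
        congr 1
        rw [sq]
        field_simp
      by_cases hmem : r⁻¹ • (u : Rd d) ∈ A
      · rw [Set.indicator_of_mem (by simpa [Set.mem_preimage, hs] using hmem),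
          Set.indicator_of_mem hmem, hnorm_smul u r hr0, one_mul,
          ← ENNReal.ofReal_mul (Real.rpow_nonneg hr0.le _), ← Real.rpow_add hr0]
        ring_nf
      · rw [Set.indicator_of_notMem (by simpa [Set.mem_preimage, hs] using hmem),
          Set.indicator_of_notMem hmem, zero_mul, zero_mul]
    rw [hstep1,
      Stmt11Aux.lintegral_inv_Ioi (fun r => A.indicator (fun _ => (1 : ℝ≥0∞)) (r • (u : Rd d)) *
        ENNReal.ofReal (r ^ (-1 - (2 + β - η))))]
    refine setLIntegral_congr_fun measurableSet_Ioi (fun r hr => ?_)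
    have hr0 : (0 : ℝ) < r := hr
    have hpow : (r ^ 2)⁻¹ * r⁻¹ ^ (-1 - (2 + β - η)) = r ^ (1 + β - η) := by
      rw [← Real.rpow_natCast r 2, ← Real.rpow_neg hr0.le,
        Real.inv_rpow hr0.le, ← Real.rpow_neg hr0.le, ← Real.rpow_add hr0]
      norm_num
      ring_nf
    symm
    rw [mul_left_comm, ← ENNReal.ofReal_mul (inv_nonneg.mpr (sq_nonneg r)), hpow]
end
end

section
/- Fix p > 0, α ∈ (-∞,2)\{0}, γ = max(α,0), and let R be a Borel measure on ℝ^d with R({0}) = 0 and ∫(|x|² ∧ |x|^γ) R(dx) < ∞. Define M(A) = ∫_{ℝ^d} ∫_0^∞ 1_A(tx) t^{-1-α} e^{-t^p} dt R(dx). Then M is a Lévy measure, i.e., M({0}) = 0 and ∫(|x|² ∧ 1) M(dx) < ∞. -/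
open MeasureTheory ENNReal Filter Topology Set

noncomputable section

/-- The value `∫_{ℝ^d} ∫_0^∞ 1_A(t x) t^{-1-α} e^{-t^p} dt R(dx)` defining the Lévy
measure of a `p`-tempered `α`-stable distribution with Rosiński measure `R`. -/
def temperedVal {d : ℕ} (p α : ℝ) (R : Measure (Rd d)) (A : Set (Rd d)) : ℝ≥0∞ :=
  ∫⁻ x, (∫⁻ t in Set.Ioi (0 : ℝ),
    A.indicator (fun _ => (1 : ℝ≥0∞)) (t • x)
      * ENNReal.ofReal (t ^ (-1 - α) * Real.exp (-(t ^ p))) ∂volume) ∂ R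

namespace Stmt13Aux

/-- Integrability of `t^q e^{-t^p}` on `(0,∞)` for `q > -1`, `p > 0`. -/
lemma integrableOn_rpow_exp {p q : ℝ} (hp : 0 < p) (hq : -1 < q) :
    IntegrableOn (fun t : ℝ => t ^ q * Real.exp (-(t ^ p))) (Set.Ioi 0) := by
  have hg : IntegrableOn (fun u : ℝ => u ^ ((q + 1) / p - 1) * Real.exp (-u)) (Set.Ioi 0) := by
    have h := Real.GammaIntegral_convergent (s := (q + 1) / p) (div_pos (by linarith) hp)
    exact h.congr_fun (fun x _ => mul_comm _ _) measurableSet_Ioi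
  have h := (integrableOn_Ioi_comp_rpow_iff'
      (fun u : ℝ => u ^ ((q + 1) / p - 1) * Real.exp (-u)) hp.ne').mpr hg
  refine h.congr_fun (fun x hx => ?_) measurableSet_Ioi
  have hx0 : (0 : ℝ) < x := hx
  have key : p - 1 + p * ((q + 1) / p - 1) = q := by field_simp; ring
  beta_reduce
  rw [smul_eq_mul, ← Real.rpow_mul hx0.le, ← mul_assoc, ← Real.rpow_add hx0, key]

lemma lint_lt_top {p q : ℝ} (hp : 0 < p) (hq : -1 < q) :
    ∫⁻ t in Set.Ioi (0 : ℝ), ENNReal.ofReal (t ^ q * Real.exp (-(t ^ p))) ∂volume < ⊤ :=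
  (integrableOn_rpow_exp hp hq).setLIntegral_lt_top

lemma w_meas (p α : ℝ) :
    Measurable fun t : ℝ => ENNReal.ofReal (t ^ (-1 - α) * Real.exp (-(t ^ p))) := by
  fun_prop

/-- The global constant. -/
def Kc (p α : ℝ) : ℝ≥0∞ :=
  (∫⁻ t in Set.Ioi (0 : ℝ), ENNReal.ofReal (t ^ (1 - α) * Real.exp (-(t ^ p))) ∂volume)
    + (if α < 0 then
        ∫⁻ t in Set.Ioi (0 : ℝ), ENNReal.ofReal (t ^ (-1 - α) * Real.exp (-(t ^ p))) ∂volume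
      else ENNReal.ofReal (1 / (2 - α) + 1 / α))

lemma Kc_lt_top {p α : ℝ} (hp : 0 < p) (hα : α < 2) : Kc p α < ⊤ := by
  refine ENNReal.add_lt_top.mpr ⟨lint_lt_top hp (by linarith), ?_⟩
  split_ifs with h
  · exact lint_lt_top hp (by linarith)
  · exact ENNReal.ofReal_lt_top

lemma term_le {a e m b : ℝ} (ha : 0 ≤ a) (he : e ≤ 1) (he0 : 0 ≤ e) (hm : m ≤ b)
    (hm0 : 0 ≤ m) : a * e * m ≤ a * b := by
  nlinarith [mul_nonneg ha hm0, mul_nonneg (mul_nonneg ha hm0) (sub_nonneg.mpr he),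
    mul_nonneg ha (sub_nonneg.mpr hm)]

/-- Bound A : the integral is at most `r² C₂`. -/
lemma boundA {p α : ℝ} {r : ℝ} (hr : 0 ≤ r) :
    ∫⁻ t in Set.Ioi (0 : ℝ), ENNReal.ofReal (t ^ (-1 - α) * Real.exp (-(t ^ p)))
        * ENNReal.ofReal (min ((t * r) ^ (2 : ℝ)) 1) ∂volume
      ≤ ENNReal.ofReal (r ^ (2 : ℝ)) *
        ∫⁻ t in Set.Ioi (0 : ℝ), ENNReal.ofReal (t ^ (1 - α) * Real.exp (-(t ^ p))) ∂volume := by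
  rw [← lintegral_const_mul' _ _ ENNReal.ofReal_ne_top]
  refine lintegral_mono_ae ?_
  filter_upwards [ae_restrict_mem measurableSet_Ioi] with t ht
  have ht0 : (0 : ℝ) < t := ht
  rw [← ENNReal.ofReal_mul (mul_nonneg (Real.rpow_nonneg ht0.le _) (Real.exp_nonneg _)),
    ← ENNReal.ofReal_mul (Real.rpow_nonneg hr _)]
  apply ENNReal.ofReal_le_ofReal
  have h2 : (t * r) ^ (2 : ℝ) = t ^ (2 : ℝ) * r ^ (2 : ℝ) := Real.mul_rpow ht0.le hr
  have h3 : t ^ (-1 - α) * t ^ (2 : ℝ) = t ^ (1 - α) := by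
    rw [← Real.rpow_add ht0, show (-1 : ℝ) - α + 2 = 1 - α by ring]
  calc t ^ (-1 - α) * Real.exp (-(t ^ p)) * min ((t * r) ^ (2 : ℝ)) 1
      ≤ t ^ (-1 - α) * Real.exp (-(t ^ p)) * ((t * r) ^ (2 : ℝ)) := by
        refine mul_le_mul_of_nonneg_left (min_le_left _ _)
          (mul_nonneg (Real.rpow_nonneg ht0.le _) (Real.exp_nonneg _))
    _ = r ^ (2 : ℝ) * (t ^ (1 - α) * Real.exp (-(t ^ p))) := by rw [h2, ← h3]; ring

/-- Bound B1 : the integral is at most `C₀`. -/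
lemma boundB1 {p α : ℝ} {r : ℝ} :
    ∫⁻ t in Set.Ioi (0 : ℝ), ENNReal.ofReal (t ^ (-1 - α) * Real.exp (-(t ^ p)))
        * ENNReal.ofReal (min ((t * r) ^ (2 : ℝ)) 1) ∂volume
      ≤ ∫⁻ t in Set.Ioi (0 : ℝ), ENNReal.ofReal (t ^ (-1 - α) * Real.exp (-(t ^ p))) ∂volume := by
  refine lintegral_mono fun t => ?_
  calc ENNReal.ofReal (t ^ (-1 - α) * Real.exp (-(t ^ p)))
        * ENNReal.ofReal (min ((t * r) ^ (2 : ℝ)) 1)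
      ≤ ENNReal.ofReal (t ^ (-1 - α) * Real.exp (-(t ^ p))) * 1 :=
        mul_le_mul_right (ENNReal.ofReal_le_one.mpr (min_le_right _ _)) _
    _ = _ := mul_one _

/-- Bound B2 : for `0 < α < 2` and `r > 0` the integral is at most
`r^α (1/(2-α) + 1/α)`. -/
lemma boundB2 {p α : ℝ} (hα : α < 2) (hα0 : 0 < α) {r : ℝ} (hr0 : 0 < r) :
    ∫⁻ t in Set.Ioi (0 : ℝ), ENNReal.ofReal (t ^ (-1 - α) * Real.exp (-(t ^ p)))
        * ENNReal.ofReal (min ((t * r) ^ (2 : ℝ)) 1) ∂volume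
      ≤ ENNReal.ofReal (r ^ α * (1 / (2 - α) + 1 / α)) := by
  have hc : (0 : ℝ) < r⁻¹ := inv_pos.mpr hr0
  have hset : Set.Ioi (0 : ℝ) = Set.Ioc 0 r⁻¹ ∪ Set.Ioi r⁻¹ :=
    (Set.Ioc_union_Ioi_eq_Ioi hc.le).symm
  rw [hset, lintegral_union measurableSet_Ioi (Set.Ioc_disjoint_Ioi le_rfl)]
  have piece1 : ∫⁻ t in Set.Ioc (0 : ℝ) r⁻¹, ENNReal.ofReal (t ^ (-1 - α) * Real.exp (-(t ^ p)))
        * ENNReal.ofReal (min ((t * r) ^ (2 : ℝ)) 1) ∂volume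
      ≤ ENNReal.ofReal (r ^ α * (1 / (2 - α))) := by
    have step : ∫⁻ t in Set.Ioc (0 : ℝ) r⁻¹, ENNReal.ofReal (t ^ (-1 - α) * Real.exp (-(t ^ p)))
          * ENNReal.ofReal (min ((t * r) ^ (2 : ℝ)) 1) ∂volume
        ≤ ∫⁻ t in Set.Ioc (0 : ℝ) r⁻¹, ENNReal.ofReal (r ^ (2 : ℝ) * t ^ (1 - α)) ∂volume := by
      refine lintegral_mono_ae ?_
      filter_upwards [ae_restrict_mem measurableSet_Ioc] with t ht
      have ht0 : (0 : ℝ) < t := ht.1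
      rw [← ENNReal.ofReal_mul (mul_nonneg (Real.rpow_nonneg ht0.le _) (Real.exp_nonneg _))]
      apply ENNReal.ofReal_le_ofReal
      have h2 : (t * r) ^ (2 : ℝ) = t ^ (2 : ℝ) * r ^ (2 : ℝ) := Real.mul_rpow ht0.le hr0.le
      have h3 : t ^ (-1 - α) * t ^ (2 : ℝ) = t ^ (1 - α) := by
        rw [← Real.rpow_add ht0, show (-1 : ℝ) - α + 2 = 1 - α by ring]
      have := term_le (a := t ^ (-1 - α)) (e := Real.exp (-(t ^ p)))
        (m := min ((t * r) ^ (2 : ℝ)) 1) (b := (t * r) ^ (2 : ℝ))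
        (Real.rpow_nonneg ht0.le _)
        (Real.exp_le_one_iff.mpr (neg_nonpos.mpr (Real.rpow_nonneg ht0.le _)))
        (Real.exp_nonneg _) (min_le_left _ _)
        (le_min (Real.rpow_nonneg (mul_nonneg ht0.le hr0.le) _) zero_le_one)
      calc t ^ (-1 - α) * Real.exp (-(t ^ p)) * min ((t * r) ^ (2 : ℝ)) 1
          ≤ t ^ (-1 - α) * ((t * r) ^ (2 : ℝ)) := this
        _ = r ^ (2 : ℝ) * t ^ (1 - α) := by rw [h2, ← h3]; ring
    refine step.trans (le_of_eq ?_)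
    have int1 : IntegrableOn (fun t : ℝ => r ^ (2 : ℝ) * t ^ (1 - α)) (Set.Ioc 0 r⁻¹) := by
      have h := intervalIntegral.intervalIntegrable_rpow' (a := 0) (b := r⁻¹)
        (r := 1 - α) (by linarith)
      rw [intervalIntegrable_iff_integrableOn_Ioc_of_le hc.le] at h
      exact h.const_mul _
    rw [← ofReal_integral_eq_lintegral_ofReal int1 ?_]
    · congr 1
      rw [← intervalIntegral.integral_of_le hc.le, intervalIntegral.integral_const_mul,
        integral_rpow (Or.inl (by linarith))]
      rw [Real.zero_rpow (by linarith : (0 : ℝ) < 1 - α + 1).ne']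
      have h1 : (r⁻¹) ^ (1 - α + 1) = r ^ (α - 2) := by
        rw [Real.inv_rpow hr0.le, ← Real.rpow_neg hr0.le, show -(1 - α + 1) = α - 2 by ring]
      have h2 : r ^ (2 : ℝ) * r ^ (α - 2) = r ^ α := by
        rw [← Real.rpow_add hr0, show (2 : ℝ) + (α - 2) = α by ring]
      rw [h1, sub_zero, show (1 : ℝ) - α + 1 = 2 - α by ring, ← h2]
      ring
    · filter_upwards [ae_restrict_mem measurableSet_Ioc] with t ht
      exact mul_nonneg (Real.rpow_nonneg hr0.le _) (Real.rpow_nonneg ht.1.le _)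
  have piece2 : ∫⁻ t in Set.Ioi r⁻¹, ENNReal.ofReal (t ^ (-1 - α) * Real.exp (-(t ^ p)))
        * ENNReal.ofReal (min ((t * r) ^ (2 : ℝ)) 1) ∂volume
      ≤ ENNReal.ofReal (r ^ α * (1 / α)) := by
    have step : ∫⁻ t in Set.Ioi r⁻¹, ENNReal.ofReal (t ^ (-1 - α) * Real.exp (-(t ^ p)))
          * ENNReal.ofReal (min ((t * r) ^ (2 : ℝ)) 1) ∂volume
        ≤ ∫⁻ t in Set.Ioi r⁻¹, ENNReal.ofReal (t ^ (-1 - α)) ∂volume := by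
      refine lintegral_mono_ae ?_
      filter_upwards [ae_restrict_mem measurableSet_Ioi] with t ht
      have ht0 : (0 : ℝ) < t := hc.trans ht
      rw [← ENNReal.ofReal_mul (mul_nonneg (Real.rpow_nonneg ht0.le _) (Real.exp_nonneg _))]
      apply ENNReal.ofReal_le_ofReal
      have := term_le (a := t ^ (-1 - α)) (e := Real.exp (-(t ^ p)))
        (m := min ((t * r) ^ (2 : ℝ)) 1) (b := 1)
        (Real.rpow_nonneg ht0.le _)
        (Real.exp_le_one_iff.mpr (neg_nonpos.mpr (Real.rpow_nonneg ht0.le _)))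
        (Real.exp_nonneg _) (min_le_right _ _)
        (le_min (Real.rpow_nonneg (mul_nonneg ht0.le hr0.le) _) zero_le_one)
      simpa using this
    refine step.trans (le_of_eq ?_)
    have int2 : IntegrableOn (fun t : ℝ => t ^ (-1 - α)) (Set.Ioi r⁻¹) :=
      integrableOn_Ioi_rpow_of_lt (by linarith) hc
    rw [← ofReal_integral_eq_lintegral_ofReal int2 ?_]
    · congr 1
      rw [integral_Ioi_rpow_of_lt (by linarith) hc]
      have h1 : (r⁻¹) ^ (-1 - α + 1) = r ^ α := by
        rw [Real.inv_rpow hr0.le, ← Real.rpow_neg hr0.le]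
        norm_num
      rw [h1, show (-1 : ℝ) - α + 1 = -α by ring]
      field_simp
    · filter_upwards [ae_restrict_mem measurableSet_Ioi] with t ht
      exact Real.rpow_nonneg (hc.trans ht).le _
  calc _ ≤ ENNReal.ofReal (r ^ α * (1 / (2 - α))) + ENNReal.ofReal (r ^ α * (1 / α)) :=
        add_le_add piece1 piece2
    _ = ENNReal.ofReal (r ^ α * (1 / (2 - α) + 1 / α)) := by
        rw [← ENNReal.ofReal_add
          (mul_nonneg (Real.rpow_nonneg hr0.le _) (div_nonneg zero_le_one (by linarith)))
          (mul_nonneg (Real.rpow_nonneg hr0.le _) (div_nonneg zero_le_one hα0.le)), ← mul_add]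

/-- The key pointwise bound. -/
lemma key_bound {p α : ℝ} (hp : 0 < p) (hα : α < 2) (hα0 : α ≠ 0) {r : ℝ} (hr : 0 ≤ r) :
    ∫⁻ t in Set.Ioi (0 : ℝ), ENNReal.ofReal (t ^ (-1 - α) * Real.exp (-(t ^ p)))
        * ENNReal.ofReal (min ((t * r) ^ (2 : ℝ)) 1) ∂volume
      ≤ Kc p α * ENNReal.ofReal (min (r ^ (2 : ℝ)) (r ^ (max α 0))) := by
  rcases lt_or_gt_of_ne hα0 with hneg | hpos
  · -- α < 0 : max α 0 = 0, r^0 = 1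
    rw [max_eq_right hneg.le, Real.rpow_zero]
    rcases le_or_gt r 1 with hr1 | hr1
    · have hmin : min (r ^ (2 : ℝ)) 1 = r ^ (2 : ℝ) :=
        min_eq_left (Real.rpow_le_one hr hr1 (by norm_num))
      rw [hmin]
      refine (boundA hr).trans ?_
      rw [mul_comm]
      exact mul_le_mul_left le_self_add _
    · have hmin : min (r ^ (2 : ℝ)) 1 = 1 :=
        min_eq_right (Real.one_le_rpow hr1.le (by norm_num))
      rw [hmin]
      refine boundB1.trans ?_
      rw [ENNReal.ofReal_one, mul_one]
      calc (∫⁻ t in Set.Ioi (0 : ℝ),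
            ENNReal.ofReal (t ^ (-1 - α) * Real.exp (-(t ^ p))) ∂volume)
          = (if α < 0 then ∫⁻ t in Set.Ioi (0 : ℝ),
              ENNReal.ofReal (t ^ (-1 - α) * Real.exp (-(t ^ p))) ∂volume
            else ENNReal.ofReal (1 / (2 - α) + 1 / α)) := by rw [if_pos hneg]
        _ ≤ Kc p α := le_add_self
  · -- 0 < α
    rw [max_eq_left hpos.le]
    rcases eq_or_lt_of_le hr with hr0 | hr0
    · -- r = 0
      have : ∀ t : ℝ, ENNReal.ofReal (min ((t * r) ^ (2 : ℝ)) 1) = 0 := by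
        intro t
        rw [← hr0, mul_zero, Real.zero_rpow (by norm_num), min_eq_left zero_le_one]
        simp
      simp only [this, mul_zero, lintegral_zero]
      exact zero_le
    rcases le_or_gt r 1 with hr1 | hr1
    · have hmin : min (r ^ (2 : ℝ)) (r ^ α) = r ^ (2 : ℝ) :=
        min_eq_left (Real.rpow_le_rpow_of_exponent_ge hr0 hr1 hα.le)
      rw [hmin]
      refine (boundA hr).trans ?_
      rw [mul_comm]
      exact mul_le_mul_left le_self_add _
    · have hmin : min (r ^ (2 : ℝ)) (r ^ α) = r ^ α :=
        min_eq_right (Real.rpow_le_rpow_of_exponent_le hr1.le hα.le)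
      rw [hmin]
      refine (boundB2 hα hpos hr0).trans ?_
      rw [ENNReal.ofReal_mul (Real.rpow_nonneg hr _), mul_comm]
      refine mul_le_mul_left ?_ _
      calc ENNReal.ofReal (1 / (2 - α) + 1 / α)
          = (if α < 0 then ∫⁻ t in Set.Ioi (0 : ℝ),
              ENNReal.ofReal (t ^ (-1 - α) * Real.exp (-(t ^ p))) ∂volume
            else ENNReal.ofReal (1 / (2 - α) + 1 / α)) := by rw [if_neg (not_lt.mpr hpos.le)]
        _ ≤ Kc p α := le_add_self

end Stmt13Aux

open Stmt13Aux in
theorem stmt13 {d : ℕ} (p α : ℝ) (hp : 0 < p) (hα : α < 2) (hα0 : α ≠ 0)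
    (R : Measure (Rd d)) (hR0 : R {0} = 0)
    (hR : ∫⁻ x, ENNReal.ofReal (min (‖x‖ ^ (2 : ℝ)) (‖x‖ ^ (max α 0))) ∂ R < ⊤)
    (M : Measure (Rd d))
    (hM : ∀ A : Set (Rd d), MeasurableSet A → M A = temperedVal p α R A) :
    M {0} = 0 ∧ ∫⁻ x, ENNReal.ofReal (min (‖x‖ ^ (2 : ℝ)) 1) ∂M < ⊤ := by
  set w : ℝ → ℝ≥0∞ := fun t => ENNReal.ofReal (t ^ (-1 - α) * Real.exp (-(t ^ p))) with hw_def
  have hw : Measurable w := w_meas p α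
  constructor
  · -- `M {0} = 0`
    rw [hM _ (measurableSet_singleton 0)]
    unfold temperedVal
    have h0 : (fun x : Rd d => ∫⁻ t in Set.Ioi (0 : ℝ),
        ({0} : Set (Rd d)).indicator (fun _ => (1 : ℝ≥0∞)) (t • x) * w t ∂volume)
        =ᵐ[R] 0 := by
      refine measure_mono_null ?_ hR0
      intro x hx
      simp only [Set.mem_compl_iff, Set.mem_setOf_eq, Pi.zero_apply] at hx
      by_contra hx0
      simp only [Set.mem_singleton_iff] at hx0
      apply hx
      have : ∀ t ∈ Set.Ioi (0 : ℝ),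
          ({0} : Set (Rd d)).indicator (fun _ => (1 : ℝ≥0∞)) (t • x) * w t = 0 := by
        intro t ht
        have : t • x ≠ 0 := by
          simp only [ne_eq, smul_eq_zero, not_or]
          exact ⟨ne_of_gt ht, hx0⟩
        simp [Set.indicator_of_notMem, this]
      rw [setLIntegral_congr_fun measurableSet_Ioi this]
      simp
    rw [lintegral_congr_ae h0]
    simp
  · -- finiteness
    set μt : Measure ℝ := (volume.restrict (Set.Ioi 0)).withDensity w with hμt_def
    have hsmul : Measurable fun z : Rd d × ℝ => z.2 • z.1 :=
      (continuous_snd.smul continuous_fst).measurable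
    have hg : Measurable fun y : Rd d => ENNReal.ofReal (min (‖y‖ ^ (2 : ℝ)) 1) :=
      (ENNReal.continuous_ofReal.comp
        (((continuous_norm.rpow_const fun y => Or.inr (by norm_num))).min
          continuous_const)).measurable
    have hMeq : M = Measure.map (fun z : Rd d × ℝ => z.2 • z.1) (R.prod μt) := by
      ext A hA
      rw [hM A hA, Measure.map_apply hsmul hA, Measure.prod_apply (hsmul hA)]
      unfold temperedVal
      refine lintegral_congr fun x => ?_
      have hSx : MeasurableSet {t : ℝ | t • x ∈ A} :=
        (continuous_id.smul (continuous_const : Continuous fun _ : ℝ => x)).measurable hA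
      have hpre : (Prod.mk x ⁻¹' ((fun z : Rd d × ℝ => z.2 • z.1) ⁻¹' A))
          = {t : ℝ | t • x ∈ A} := rfl
      rw [hpre, withDensity_apply _ hSx, ← lintegral_indicator hSx]
      refine lintegral_congr fun t => ?_
      by_cases h : t • x ∈ A <;> simp [Set.indicator, h, hw_def]
    have key : ∫⁻ y, ENNReal.ofReal (min (‖y‖ ^ (2 : ℝ)) 1) ∂M
        = ∫⁻ x, ∫⁻ t in Set.Ioi (0 : ℝ),
            w t * ENNReal.ofReal (min (‖t • x‖ ^ (2 : ℝ)) 1) ∂volume ∂ R := by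
      rw [hMeq, lintegral_map hg hsmul, lintegral_prod (fun z : Rd d × ℝ => ENNReal.ofReal (min (‖z.2 • z.1‖ ^ (2 : ℝ)) 1)) ((hg.comp hsmul).aemeasurable)]
      refine lintegral_congr fun x => ?_
      exact lintegral_withDensity_eq_lintegral_mul (volume.restrict (Set.Ioi 0)) hw
        (g := fun t : ℝ => ENNReal.ofReal (min (‖t • x‖ ^ (2 : ℝ)) 1))
        (hg.comp (continuous_id.smul (continuous_const : Continuous fun _ : ℝ => x)).measurable)
    rw [key]
    have bound : ∀ x : Rd d, ∫⁻ t in Set.Ioi (0 : ℝ),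
        w t * ENNReal.ofReal (min (‖t • x‖ ^ (2 : ℝ)) 1) ∂volume
        ≤ Kc p α * ENNReal.ofReal (min (‖x‖ ^ (2 : ℝ)) (‖x‖ ^ (max α 0))) := by
      intro x
      have congr1 : ∫⁻ t in Set.Ioi (0 : ℝ),
          w t * ENNReal.ofReal (min (‖t • x‖ ^ (2 : ℝ)) 1) ∂volume
          = ∫⁻ t in Set.Ioi (0 : ℝ),
          w t * ENNReal.ofReal (min ((t * ‖x‖) ^ (2 : ℝ)) 1) ∂volume := by
        refine setLIntegral_congr_fun measurableSet_Ioi (fun t ht => ?_)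
        have ht0 : (0 : ℝ) < t := ht
        rw [norm_smul, Real.norm_eq_abs, abs_of_pos ht0]
      rw [congr1]
      exact key_bound hp hα hα0 (norm_nonneg x)
    calc ∫⁻ x, ∫⁻ t in Set.Ioi (0 : ℝ),
          w t * ENNReal.ofReal (min (‖t • x‖ ^ (2 : ℝ)) 1) ∂volume ∂ R
        ≤ ∫⁻ x, Kc p α * ENNReal.ofReal (min (‖x‖ ^ (2 : ℝ)) (‖x‖ ^ (max α 0))) ∂ R :=
          lintegral_mono bound
      _ = Kc p α * ∫⁻ x, ENNReal.ofReal (min (‖x‖ ^ (2 : ℝ)) (‖x‖ ^ (max α 0))) ∂ R :=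
          lintegral_const_mul' _ _ (Kc_lt_top hp hα).ne
      _ < ⊤ := ENNReal.mul_lt_top (Kc_lt_top hp hα) hR
end
end

section
/- Fix η ∈ (0,2), p > 0, α ∈ (-∞,2)\{0} with γ = max(α,0) < η. Let M(A) = ∫_{S^{d-1}} ∫_0^∞ 1_A(ur) r^{-1-η} dr σ(du) be an η-stable Lévy measure, and set K_{η,α,p} = ∫_0^∞ t^{η-α-1} e^{-t^p} dt and R(dx) = K_{η,α,p}^{-1} M(dx). Then ∫_{ℝ^d} ∫_0^∞ 1_A(tx) t^{-1-α} e^{-t^p} dt R(dx) = M(A) for all Borel A; i.e., the η-stable Lévy measure is p-tempered α-stable with Rosiński measure R = K_{η,α,p}^{-1} M. -/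
open MeasureTheory ENNReal Filter Topology Set

lemma myIntegrableOn {p q : ℝ} (hp : 0 < p) (hq : -1 < q) :
    IntegrableOn (fun t : ℝ => t ^ q * Real.exp (-(t ^ p))) (Set.Ioi 0) := by
  have h0 : (0:ℝ) < (q + 1) / p := div_pos (by linarith) hp
  have h := (integrableOn_Ioi_comp_rpow_iff'
      (fun x => Real.exp (-x) * x ^ ((q + 1) / p - 1)) hp.ne').mpr
      (Real.GammaIntegral_convergent h0)
  refine h.congr_fun (fun x hx => ?_) measurableSet_Ioi
  have hx0 : (0:ℝ) < x := hx
  have hxp : (0:ℝ) < x ^ p := Real.rpow_pos_of_pos hx0 p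
  have e1 : (x ^ p) ^ ((q + 1) / p - 1) = x ^ (q + 1 - p) := by
    rw [← Real.rpow_mul hx0.le]; congr 1; field_simp
  have e2 : p - 1 + (q + 1 - p) = q := by ring
  beta_reduce; rw [smul_eq_mul, e1, ← e2, Real.rpow_add hx0]; ring

lemma myScale {c : ℝ} (hc : 0 < c) (h : ℝ → ℝ≥0∞) (hh : Measurable h) :
    ∫⁻ r in Set.Ioi (0:ℝ), h (c * r) ∂volume
      = ENNReal.ofReal c⁻¹ * ∫⁻ s in Set.Ioi (0:ℝ), h s ∂volume := by
  have hpre : (fun r : ℝ => c * r) ⁻¹' (Set.Ioi 0) = Set.Ioi 0 := by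
    rw [preimage_const_mul_Ioi₀ _ hc, zero_div]
  have hmap : Measure.map (fun r : ℝ => c * r) (volume.restrict (Set.Ioi 0))
      = ENNReal.ofReal c⁻¹ • volume.restrict (Set.Ioi 0) := by
    conv_lhs => rw [← hpre]
    rw [← Measure.restrict_map (measurable_const_mul c) measurableSet_Ioi,
      Real.map_volume_mul_left hc.ne', Measure.restrict_smul, abs_inv, abs_of_pos hc]
  calc ∫⁻ r in Set.Ioi (0:ℝ), h (c * r) ∂volume
      = ∫⁻ x, h x ∂(Measure.map (fun r : ℝ => c * r) (volume.restrict (Set.Ioi 0))) :=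
        (lintegral_map hh (measurable_const_mul c)).symm
    _ = _ := by rw [hmap, lintegral_smul_measure, smul_eq_mul]
noncomputable section

theorem stmt14 {d : ℕ} (p α η : ℝ) (hp : 0 < p) (hα : α < 2) (hα0 : α ≠ 0)
    (hη : η ∈ Set.Ioo (0 : ℝ) 2) (hγη : max α 0 < η)
    (σ : Measure (Metric.sphere (0 : Rd d) 1)) [IsFiniteMeasure σ] (hσ : σ ≠ 0)
    (M : Measure (Rd d))
    (hM : ∀ A : Set (Rd d), MeasurableSet A → M A = stableVal η σ A)
    (K : ℝ) (hK : K = ∫ t in Set.Ioi (0 : ℝ), t ^ (η - α - 1) * Real.exp (-(t ^ p))) :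
    ∀ A : Set (Rd d), MeasurableSet A →
      temperedVal p α ((ENNReal.ofReal K)⁻¹ • M) A = M A := by

  intro A hA
  have hαη : α < η := lt_of_le_of_lt (le_max_left _ _) hγη
  have hKpos : 0 < K := by
    rw [hK, integral_rpow_mul_exp_neg_rpow hp (by linarith)]
    have h0 : (0:ℝ) < (η - α - 1 + 1) / p := div_pos (by linarith) hp
    exact mul_pos (by positivity) (Real.Gamma_pos_of_pos h0)
  have hK0 : ENNReal.ofReal K ≠ 0 := (ENNReal.ofReal_pos.mpr hKpos).ne'
  set ind : Rd d → ℝ≥0∞ := A.indicator (fun _ => (1 : ℝ≥0∞)) with hind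
  have hindm : Measurable ind := measurable_const.indicator hA
  set w : ℝ → ℝ≥0∞ := fun r => ENNReal.ofReal (r ^ (-1 - η)) with hw
  have hwm : Measurable w := by fun_prop
  set g : ℝ → ℝ≥0∞ := fun t => ENNReal.ofReal (t ^ (-1 - α) * Real.exp (-(t ^ p))) with hg
  have hgm : Measurable g := by fun_prop
  set μr : Measure ℝ := (volume.restrict (Set.Ioi 0)).withDensity w with hμr
  have hsm : Measurable fun q : Metric.sphere (0 : Rd d) 1 × ℝ => q.2 • (q.1 : Rd d) :=
    (continuous_snd.smul (continuous_subtype_val.comp continuous_fst)).measurable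
  -- M is the polar-coordinates measure
  have hMeq : M = Measure.map (fun q : Metric.sphere (0 : Rd d) 1 × ℝ => q.2 • (q.1 : Rd d))
      (σ.prod μr) := by
    ext s hs
    rw [hM s hs, Measure.map_apply hsm hs, Measure.prod_apply (hsm hs)]
    refine lintegral_congr fun u => ?_
    have hBm : MeasurableSet ((fun r : ℝ => r • (u : Rd d)) ⁻¹' s) :=
      (continuous_id.smul continuous_const).measurable hs
    have hps : Prod.mk u ⁻¹' ((fun q : Metric.sphere (0 : Rd d) 1 × ℝ =>
        q.2 • (q.1 : Rd d)) ⁻¹' s) = (fun r : ℝ => r • (u : Rd d)) ⁻¹' s := rfl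
    rw [hps, hμr, withDensity_apply w hBm, ← lintegral_indicator hBm]
    refine setLIntegral_congr_fun measurableSet_Ioi (fun r _ => ?_)
    by_cases hr : r • (u : Rd d) ∈ s
    · rw [Set.indicator_of_mem hr,
        Set.indicator_of_mem (show r ∈ (fun r : ℝ => r • (u : Rd d)) ⁻¹' s from hr), one_mul]
    · rw [Set.indicator_of_notMem hr,
        Set.indicator_of_notMem (show r ∉ (fun r : ℝ => r • (u : Rd d)) ⁻¹' s from hr), zero_mul]
  -- integration against M in polar coordinates
  have hν : ∀ f : Rd d → ℝ≥0∞, Measurable f →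
      ∫⁻ x, f x ∂M = ∫⁻ u, ∫⁻ r in Set.Ioi (0:ℝ), w r * f (r • (u : Rd d)) ∂volume ∂σ := by
    intro f hf
    have h1 : Measurable fun a : Metric.sphere (0 : Rd d) 1 × ℝ => f (a.2 • (a.1 : Rd d)) :=
      hf.comp hsm
    rw [hMeq, lintegral_map hf hsm, lintegral_prod _ h1.aemeasurable]
    refine lintegral_congr fun u => ?_
    have h2 : Measurable fun r : ℝ => f (r • (u : Rd d)) :=
      hf.comp ((continuous_id.smul continuous_const).measurable)
    rw [hμr, lintegral_withDensity_eq_lintegral_mul _ hwm h2]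
    exact lintegral_congr fun r => rfl
  set f : Rd d → ℝ≥0∞ := fun x => ∫⁻ t in Set.Ioi (0:ℝ), ind (t • x) * g t ∂volume with hf
  have hfm : Measurable f := by
    apply Measurable.lintegral_prod_right'
      (f := fun z : Rd d × ℝ => ind (z.2 • z.1) * g z.2)
    exact (hindm.comp (measurable_snd.smul measurable_fst)).mul (hgm.comp measurable_snd)
  have hSm : ∀ u : Metric.sphere (0 : Rd d) 1,
      Measurable fun s : ℝ => ind (s • (u : Rd d)) * w s := fun u =>
    (hindm.comp (continuous_id.smul continuous_const).measurable).mul hwm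
  -- the inner computation
  have hinner : ∀ u : Metric.sphere (0 : Rd d) 1,
      ∫⁻ r in Set.Ioi (0:ℝ), w r * f (r • (u : Rd d)) ∂volume
        = ENNReal.ofReal K * ∫⁻ s in Set.Ioi (0:ℝ), ind (s • (u : Rd d)) * w s ∂volume := by
    intro u
    set S : ℝ≥0∞ := ∫⁻ s in Set.Ioi (0:ℝ), ind (s • (u : Rd d)) * w s ∂volume with hS
    calc ∫⁻ r in Set.Ioi (0:ℝ), w r * f (r • (u : Rd d)) ∂volume
        = ∫⁻ r in Set.Ioi (0:ℝ), ∫⁻ t in Set.Ioi (0:ℝ),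
            w r * (ind ((t * r) • (u : Rd d)) * g t) ∂volume ∂volume := by
          refine lintegral_congr fun r => ?_
          have hfr : f (r • (u : Rd d))
              = ∫⁻ t in Set.Ioi (0:ℝ), ind ((t * r) • (u : Rd d)) * g t ∂volume :=
            lintegral_congr fun t => by rw [smul_smul]
          have hm0 : Measurable fun t : ℝ => ind ((t * r) • (u : Rd d)) * g t :=
            (hindm.comp ((measurable_id.mul_const r).smul_const _)).mul hgm
          rw [hfr]
          exact (lintegral_const_mul (w r) hm0).symm
      _ = ∫⁻ t in Set.Ioi (0:ℝ), ∫⁻ r in Set.Ioi (0:ℝ),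
            w r * (ind ((t * r) • (u : Rd d)) * g t) ∂volume ∂volume := by
          apply lintegral_lintegral_swap
          apply Measurable.aemeasurable
          exact (hwm.comp measurable_fst).mul
            (((hindm.comp (((measurable_snd.mul measurable_fst)).smul_const _))).mul
              (hgm.comp measurable_snd))
      _ = ∫⁻ t in Set.Ioi (0:ℝ), g t * (ENNReal.ofReal (t ^ η) * S) ∂volume := by
          refine setLIntegral_congr_fun measurableSet_Ioi
            (fun t ht => ?_)
          have ht0 : (0:ℝ) < t := ht
          have hm1 : Measurable fun r : ℝ =>
              ind ((t * r) • (u : Rd d)) * ENNReal.ofReal ((t * r) ^ (-1 - η)) :=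
            (hindm.comp ((measurable_const_mul t).smul_const _)).mul (by fun_prop)
          have key : ∀ r : ℝ, r ∈ Set.Ioi (0:ℝ) →
              ind ((t * r) • (u : Rd d)) * w r
                = ENNReal.ofReal (t ^ (1 + η)) *
                  (ind ((t * r) • (u : Rd d)) * ENNReal.ofReal ((t * r) ^ (-1 - η))) := by
            intro r hr
            have hr0 : (0:ℝ) < r := hr
            rw [← mul_assoc, mul_comm (ENNReal.ofReal (t ^ (1 + η))) (ind _), mul_assoc]
            congr 1
            rw [← ENNReal.ofReal_mul (by positivity)]
            congr 1
            rw [Real.mul_rpow ht0.le hr0.le, ← mul_assoc, ← Real.rpow_add ht0]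
            norm_num
            rfl
          have h3 : ∫⁻ r in Set.Ioi (0:ℝ),
              ind ((t * r) • (u : Rd d)) * ENNReal.ofReal ((t * r) ^ (-1 - η)) ∂volume
                = ENNReal.ofReal t⁻¹ * S :=
            myScale ht0 (fun s => ind (s • (u : Rd d)) * w s) (hSm u)
          have step : ∫⁻ r in Set.Ioi (0:ℝ), ind ((t * r) • (u : Rd d)) * w r ∂volume
              = ENNReal.ofReal (t ^ η) * S := by
            calc ∫⁻ r in Set.Ioi (0:ℝ), ind ((t * r) • (u : Rd d)) * w r ∂volume
                = ∫⁻ r in Set.Ioi (0:ℝ), ENNReal.ofReal (t ^ (1 + η)) *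
                    (ind ((t * r) • (u : Rd d)) * ENNReal.ofReal ((t * r) ^ (-1 - η)))
                      ∂volume :=
                  setLIntegral_congr_fun measurableSet_Ioi key
              _ = ENNReal.ofReal (t ^ (1 + η)) * (ENNReal.ofReal t⁻¹ * S) := by
                  rw [lintegral_const_mul _ hm1, h3]
              _ = ENNReal.ofReal (t ^ η) * S := by
                  rw [← mul_assoc, ← ENNReal.ofReal_mul (by positivity)]
                  congr 2
                  rw [Real.rpow_add ht0, Real.rpow_one]
                  field_simp
          have hm2 : Measurable fun r : ℝ => ind ((t * r) • (u : Rd d)) * w r :=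
            (hindm.comp ((measurable_const_mul t).smul_const _)).mul hwm
          calc ∫⁻ r in Set.Ioi (0:ℝ), w r * (ind ((t * r) • (u : Rd d)) * g t) ∂volume
              = ∫⁻ r in Set.Ioi (0:ℝ), g t * (ind ((t * r) • (u : Rd d)) * w r) ∂volume :=
                lintegral_congr fun r => by ring
            _ = g t * ∫⁻ r in Set.Ioi (0:ℝ), ind ((t * r) • (u : Rd d)) * w r ∂volume :=
                lintegral_const_mul _ hm2
            _ = g t * (ENNReal.ofReal (t ^ η) * S) := by rw [step]
      _ = ∫⁻ t in Set.Ioi (0:ℝ), (g t * ENNReal.ofReal (t ^ η)) * S ∂volume :=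
          lintegral_congr fun t => by ring
      _ = (∫⁻ t in Set.Ioi (0:ℝ), g t * ENNReal.ofReal (t ^ η) ∂volume) * S :=
          lintegral_mul_const _ (hgm.mul (by fun_prop))
      _ = ENNReal.ofReal K * S := by
          congr 1
          have hint : IntegrableOn (fun t : ℝ => t ^ (η - α - 1) * Real.exp (-(t ^ p)))
              (Set.Ioi 0) := myIntegrableOn hp (by linarith)
          have hnn : 0 ≤ᵐ[volume.restrict (Set.Ioi (0:ℝ))]
              fun t : ℝ => t ^ (η - α - 1) * Real.exp (-(t ^ p)) := by
            refine (ae_restrict_iff' measurableSet_Ioi).mpr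
              (Filter.Eventually.of_forall fun t ht => ?_)
            have ht0 : (0:ℝ) < t := ht
            positivity
          rw [hK, ofReal_integral_eq_lintegral_ofReal hint hnn]
          refine (setLIntegral_congr_fun measurableSet_Ioi
            (fun t ht => ?_)).symm
          have ht0 : (0:ℝ) < t := ht
          rw [hg, ← ENNReal.ofReal_mul (by positivity)]
          congr 1
          rw [mul_comm (t ^ (-1 - α)) _, mul_assoc, ← Real.rpow_add ht0]
          ring_nf
  -- put everything together
  have hMA : M A = stableVal η σ A := hM A hA
  have htv : temperedVal p α ((ENNReal.ofReal K)⁻¹ • M) A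
      = ∫⁻ x, f x ∂((ENNReal.ofReal K)⁻¹ • M) := rfl
  rw [htv, lintegral_smul_measure, smul_eq_mul, hν f hfm, lintegral_congr hinner,
    lintegral_const_mul' _ _ ENNReal.ofReal_ne_top, ← mul_assoc,
    ENNReal.inv_mul_cancel hK0 ENNReal.ofReal_ne_top, one_mul, hMA]
  rfl
end
end
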